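/- Assume N ≥ 4. Under the permutation null distribution, Cov(R_{1,(u)}, R_{2,(u)}) = f₁ · ( |Ḡ|² − |Ḡ| − ∑_{i ∈ Fin N} deg_{Ḡ}(i)(deg_{Ḡ}(i) − 1) ) − p₁q₁ |Ḡ|². -/

import Mathlib

open Finset MeasureTheory
open scoped BigOperators Classical

noncomputable section

lemma count_mem_notmem {α : Type*} (A T T' : Finset α) (hTT' : Disjoint T T')
    (hT : T ⊆ A) (hT' : T' ⊆ A) (k : ℕ) (hk : T.card ≤ k) :
    ((A.powersetCard k).filter (fun S => T ⊆ S ∧ Disjoint T' S)).card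
      = (A.card - (T.card + T'.card)).choose (k - T.card) := by
  classical
  have hc : (A \ (T ∪ T')).card = A.card - (T.card + T'.card) := by
    rw [Finset.card_sdiff_of_subset (Finset.union_subset hT hT'), Finset.card_union_of_disjoint hTT']
  rw [← hc, ← Finset.card_powersetCard ((k - T.card)) (A \ (T ∪ T'))]
  apply Finset.card_bij' (fun S _ => S \ T) (fun U _ => U ∪ T)
  · intro S hS
    simp only [Finset.mem_filter, Finset.mem_powersetCard] at hS ⊢
    obtain ⟨⟨hSA, hScard⟩, hTS, hdisj⟩ := hS
    constructor
    · intro x hx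
      simp only [Finset.mem_sdiff] at hx ⊢
      refine ⟨hSA hx.1, ?_⟩
      simp only [Finset.mem_union, not_or]
      exact ⟨hx.2, fun hx' => (Finset.disjoint_left.mp hdisj hx') hx.1⟩
    · rw [Finset.card_sdiff_of_subset hTS, hScard]
  · intro U hU
    simp only [Finset.mem_filter, Finset.mem_powersetCard, Finset.mem_sdiff] at hU ⊢
    obtain ⟨hUA, hUcard⟩ := hU
    have hUT : Disjoint U T := by
      rw [Finset.disjoint_left]
      intro x hx hxT
      have := hUA hx
      simp only [Finset.mem_sdiff, Finset.mem_union, not_or] at this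
      exact this.2.1 hxT
    refine ⟨⟨?_, ?_⟩, Finset.subset_union_right, ?_⟩
    · exact Finset.union_subset (fun x hx => (Finset.mem_sdiff.mp (hUA hx)).1) hT
    · rw [Finset.card_union_of_disjoint hUT, hUcard]
      omega
    · rw [Finset.disjoint_union_right]
      constructor
      · rw [Finset.disjoint_left]
        intro x hxT' hxU
        have := hUA hxU
        simp only [Finset.mem_sdiff, Finset.mem_union, not_or] at this
        exact this.2.2 hxT'
      · exact hTT'.symm
  · intro S hS
    simp only [Finset.mem_filter] at hS
    exact Finset.sdiff_union_of_subset hS.2.1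
  · intro U hU
    simp only [Finset.mem_powersetCard, Finset.mem_sdiff] at hU
    have hUT : Disjoint U T := by
      rw [Finset.disjoint_left]
      intro x hx hxT
      have := hU.1 hx
      simp only [Finset.mem_sdiff, Finset.mem_union, not_or] at this
      exact this.2.1 hxT
    rw [Finset.union_sdiff_right, Finset.sdiff_eq_self_of_disjoint hUT]
  -- remaining: card of the target powersetCard?

lemma mem_inc_iff {V : Type*} [Fintype V] [DecidableEq V] (G : SimpleGraph V) (i : V) (e : Sym2 V) :
    e ∈ G.incidenceFinset i ↔ e ∈ G.edgeFinset ∧ i ∈ e := by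
  classical
  rw [SimpleGraph.mem_incidenceFinset, SimpleGraph.incidenceSet, Set.mem_setOf_eq,
    SimpleGraph.mem_edgeFinset]

lemma card_nondisj_pairs {V : Type*} [Fintype V] [DecidableEq V] (G : SimpleGraph V) :
    ((G.edgeFinset ×ˢ G.edgeFinset).filter (fun p => ∃ x, x ∈ p.1 ∧ x ∈ p.2)).card
      = G.edgeFinset.card + ∑ i, G.degree i * (G.degree i - 1) := by
  classical
  have hsplit := Finset.card_filter_add_card_filter_not
    (s := (G.edgeFinset ×ˢ G.edgeFinset).filter (fun p => ∃ x, x ∈ p.1 ∧ x ∈ p.2))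
    (fun p : Sym2 V × Sym2 V => p.1 = p.2)
  rw [Finset.filter_filter, Finset.filter_filter] at hsplit
  have h1 : ((G.edgeFinset ×ˢ G.edgeFinset).filter
      (fun p => (∃ x, x ∈ p.1 ∧ x ∈ p.2) ∧ p.1 = p.2)).card = G.edgeFinset.card := by
    rw [← Finset.diag_card (s := G.edgeFinset)]
    congr 1
    ext p
    simp only [Finset.mem_filter, Finset.mem_product, Finset.mem_diag]
    constructor
    · rintro ⟨⟨ha, hb⟩, _, heq⟩
      exact ⟨ha, heq⟩
    · rintro ⟨ha, heq⟩
      exact ⟨⟨ha, heq ▸ ha⟩, ⟨(Quot.out p.1).1, Sym2.out_fst_mem p.1, heq ▸ Sym2.out_fst_mem p.1⟩, heq⟩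
  have h2 : ((G.edgeFinset ×ˢ G.edgeFinset).filter
      (fun p => (∃ x, x ∈ p.1 ∧ x ∈ p.2) ∧ ¬ p.1 = p.2)).card
      = ∑ i, G.degree i * (G.degree i - 1) := by
    have hset : (G.edgeFinset ×ˢ G.edgeFinset).filter
        (fun p => (∃ x, x ∈ p.1 ∧ x ∈ p.2) ∧ ¬ p.1 = p.2)
        = Finset.univ.biUnion (fun i => (G.incidenceFinset i).offDiag) := by
      ext p
      simp only [Finset.mem_filter, Finset.mem_product, Finset.mem_biUnion, Finset.mem_univ,
        Finset.mem_offDiag, mem_inc_iff, true_and]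
      constructor
      · rintro ⟨⟨ha, hb⟩, ⟨x, hx1, hx2⟩, hne⟩
        exact ⟨x, ⟨ha, hx1⟩, ⟨hb, hx2⟩, hne⟩
      · rintro ⟨x, ⟨ha, hx1⟩, ⟨hb, hx2⟩, hne⟩
        exact ⟨⟨ha, hb⟩, ⟨x, hx1, hx2⟩, hne⟩
    rw [hset, Finset.card_biUnion]
    · apply Finset.sum_congr rfl
      intro i _
      rw [Finset.offDiag_card, SimpleGraph.card_incidenceFinset_eq_degree]
      cases' Nat.eq_zero_or_pos (G.degree i) with h h
      · simp [h]
      · obtain ⟨d, hd⟩ : ∃ d, G.degree i = d + 1 := ⟨G.degree i - 1, by omega⟩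
        rw [hd, Nat.add_sub_cancel, Nat.mul_succ, Nat.add_sub_cancel]
    · intro i _ j _ hij
      rw [Function.onFun, Finset.disjoint_left]
      rintro ⟨e, f⟩ hpe hpf
      simp only [Finset.mem_offDiag, mem_inc_iff] at hpe hpf
      obtain ⟨⟨_, hie⟩, ⟨_, hif⟩, hne⟩ := hpe
      obtain ⟨⟨_, hje⟩, ⟨_, hjf⟩, _⟩ := hpf
      have he : e = s(i, j) := (Sym2.mem_and_mem_iff hij).mp ⟨hie, hje⟩
      have hf : f = s(i, j) := (Sym2.mem_and_mem_iff hij).mp ⟨hif, hjf⟩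
      exact hne (he.trans hf.symm)
  omega

lemma ratio1 (a M : ℕ) (h : a ≤ M) :
    ((M.choose a : ℝ)) / (((M + 2).choose (a + 2) : ℝ))
      = (((a : ℝ) + 2) * ((a : ℝ) + 1)) / (((M : ℝ) + 2) * ((M : ℝ) + 1)) := by
  have e1 : (M + 1) * M.choose a = (M + 1).choose (a + 1) * (a + 1) :=
    Nat.add_one_mul_choose_eq M a
  have e2 : (M + 2) * (M + 1).choose (a + 1) = (M + 2).choose (a + 2) * (a + 2) :=
    Nat.add_one_mul_choose_eq (M + 1) (a + 1)
  have key : (M + 2) * ((M + 1) * M.choose a) = ((a + 2) * (a + 1)) * (M + 2).choose (a + 2) := by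
    calc (M + 2) * ((M + 1) * M.choose a) = (M + 2) * ((M + 1).choose (a + 1) * (a + 1)) := by
          rw [e1]
      _ = ((M + 2) * (M + 1).choose (a + 1)) * (a + 1) := by ring
      _ = ((M + 2).choose (a + 2) * (a + 2)) * (a + 1) := by rw [e2]
      _ = ((a + 2) * (a + 1)) * (M + 2).choose (a + 2) := by ring
  have hpos : 0 < (M + 2).choose (a + 2) := Nat.choose_pos (by omega)
  have hpos' : ((M + 2).choose (a + 2) : ℝ) ≠ 0 := by positivity
  have keyR : ((M : ℝ) + 2) * (((M : ℝ) + 1) * (M.choose a : ℝ))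
      = (((a : ℝ) + 2) * ((a : ℝ) + 1)) * ((M + 2).choose (a + 2) : ℝ) := by
    exact_mod_cast congrArg (Nat.cast : ℕ → ℝ) key
  have hM1 : ((M : ℝ) + 2) * ((M : ℝ) + 1) ≠ 0 := by positivity
  field_simp
  linarith [keyR]

lemma choose_symm' (n k j : ℕ) (h : k + j = n) : n.choose k = n.choose j := by
  subst h
  rw [← Nat.choose_symm (show k ≤ k + j by omega)]
  congr 1
  omega

lemma ratio2 (n b : ℕ) :
    (((n + b).choose n : ℝ)) / (((n + b + 2).choose n : ℝ))
      = (((b : ℝ) + 2) * ((b : ℝ) + 1)) / (((n : ℝ) + (b : ℝ) + 2) * ((n : ℝ) + (b : ℝ) + 1)) := by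
  rw [choose_symm' (n + b) n b (by omega), choose_symm' (n + b + 2) n (b + 2) (by omega),
    show n + b + 2 = (n + b) + 2 from by omega, ratio1 b (n + b) (by omega)]
  push_cast
  ring_nf

lemma ratio3 (a b : ℕ) :
    (((a + b).choose a : ℝ)) / (((a + b + 4).choose (a + 2) : ℝ))
      = (((a : ℝ) + 2) * ((a : ℝ) + 1) * (((b : ℝ) + 2) * ((b : ℝ) + 1)))
        / ((((a : ℝ) + (b : ℝ) + 4) * ((a : ℝ) + (b : ℝ) + 3))
          * (((a : ℝ) + (b : ℝ) + 2) * ((a : ℝ) + (b : ℝ) + 1))) := by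
  have c1 := ratio1 a (a + b) (by omega)
  have c2 := ratio1 b (a + b + 2) (by omega)
  rw [choose_symm' (a + b + 2) b (a + 2) (by omega)] at c2
  have hmid : (0:ℝ) < ((a + b + 2).choose (a + 2) : ℝ) := by
    exact_mod_cast Nat.choose_pos (show a + 2 ≤ a + b + 2 by omega)
  have hlast : (0:ℝ) < ((a + b + 4).choose (a + 2) : ℝ) := by
    exact_mod_cast Nat.choose_pos (show a + 2 ≤ a + b + 4 by omega)
  have key : (((a + b).choose a : ℝ)) / (((a + b + 4).choose (a + 2) : ℝ))
      = ((((a + b).choose a : ℝ)) / (((a + b + 2).choose (a + 2) : ℝ)))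
        * ((((a + b + 2).choose (a + 2) : ℝ)) / (((a + b + 4).choose (a + 2) : ℝ))) := by
    field_simp
  rw [key, c1, choose_symm' (a + b + 4) (a + 2) (b + 2) (by omega),
    show a + b + 4 = (a + b + 2) + 2 from by omega, c2]
  push_cast
  have h1 : ((a:ℝ) + (b:ℝ) + 2) * ((a:ℝ) + (b:ℝ) + 1) ≠ 0 := by positivity
  have h2 : ((a:ℝ) + (b:ℝ) + 4) * ((a:ℝ) + (b:ℝ) + 3) ≠ 0 := by positivity
  field_simp
  ring

lemma count_in {α : Type*} [Fintype α] [DecidableEq α] (i j : α) (hij : i ≠ j) (k : ℕ) (hk : 2 ≤ k) :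
    (((univ : Finset α).powersetCard k).filter (fun S => i ∈ S ∧ j ∈ S)).card
      = (Fintype.card α - 2).choose (k - 2) := by
  classical
  have h := count_mem_notmem (univ : Finset α) {i, j} ∅ (Finset.disjoint_empty_right _)
    (Finset.subset_univ _) (Finset.subset_univ _) k
    (by rw [Finset.card_pair hij]; exact hk)
  rw [Finset.card_pair hij, Finset.card_empty, Finset.card_univ] at h
  rw [← h]
  congr 1
  ext S
  simp [Finset.mem_filter, Finset.insert_subset_iff]

lemma count_out {α : Type*} [Fintype α] [DecidableEq α] (i j : α) (hij : i ≠ j) (k : ℕ) :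
    (((univ : Finset α).powersetCard k).filter (fun S => i ∉ S ∧ j ∉ S)).card
      = (Fintype.card α - 2).choose k := by
  classical
  have h := count_mem_notmem (univ : Finset α) ∅ {i, j} (Finset.disjoint_empty_left _)
    (Finset.subset_univ _) (Finset.subset_univ _) k (by simp)
  rw [Finset.card_pair hij, Finset.card_empty, Finset.card_univ] at h
  simp only [Nat.zero_add, Nat.sub_zero] at h
  rw [← h]
  congr 1
  ext S
  simp [Finset.mem_filter, Finset.insert_subset_iff, Finset.disjoint_insert_left,
    Finset.disjoint_singleton_left]

lemma count_inout {α : Type*} [Fintype α] [DecidableEq α] (i j x y : α) (hij : i ≠ j) (hxy : x ≠ y)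
    (hix : i ≠ x) (hiy : i ≠ y) (hjx : j ≠ x) (hjy : j ≠ y) (k : ℕ) (hk : 2 ≤ k) :
    (((univ : Finset α).powersetCard k).filter
        (fun S => (i ∈ S ∧ j ∈ S) ∧ (x ∉ S ∧ y ∉ S))).card
      = (Fintype.card α - 4).choose (k - 2) := by
  classical
  have hd : Disjoint ({i, j} : Finset α) {x, y} := by
    simp [Finset.disjoint_left, hix, hiy, hjx, hjy]
  have h := count_mem_notmem (univ : Finset α) {i, j} {x, y} hd
    (Finset.subset_univ _) (Finset.subset_univ _) k
    (by rw [Finset.card_pair hij]; exact hk)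
  rw [Finset.card_pair hij, Finset.card_pair hxy, Finset.card_univ] at h
  rw [← h]
  congr 1
  ext S
  simp [Finset.mem_filter, Finset.insert_subset_iff, Finset.disjoint_insert_left,
    Finset.disjoint_singleton_left]

/-- **part of Lemma 5 of the paper.**  Covariance of the union
within-sample edge-counts under the permutation null distribution. -/
theorem covariance_R1u_R2u
    -- number of distinct values and multiplicities
    (K : ℕ) (hK : 1 ≤ K) (m : Fin K → ℕ) (hm : ∀ u, 1 ≤ m u)
    -- total sample size
    (N : ℕ) (hN : N = ∑ u, m u) (hNge : 4 ≤ N)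
    -- value map with prescribed fiber sizes
    (v : Fin N → Fin K)
    (hv : ∀ u, (Finset.univ.filter (fun i => v i = u)).card = m u)
    -- similarity graph on the distinct values
    (C₀ : SimpleGraph (Fin K))
    -- sizes of sample 1 and sample 2
    (n₁ n₂ : ℕ) (hn₁ : 1 ≤ n₁) (hn₁' : n₁ ≤ N - 1) (hn₂ : n₂ = N - n₁)
    -- expectation under the permutation null distribution (uniform over
    -- all `n₁`-element subsets of `Fin N`)
    (E : (Finset (Fin N) → ℝ) → ℝ)
    (hE : ∀ f, E f =
      (∑ S ∈ Finset.powersetCard n₁ (Finset.univ : Finset (Fin N)), f S) / (N.choose n₁ : ℝ))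
    -- the union graph Ḡ on the observations
    (Gbar : SimpleGraph (Fin N))
    (hGbar : ∀ i j, Gbar.Adj i j ↔ i ≠ j ∧ (v i = v j ∨ C₀.Adj (v i) (v j)))
    -- the union statistics: edge-counts within sample 1 and within sample 2
    (R1u : Finset (Fin N) → ℝ)
    (hR1u : ∀ S, R1u S =
      ((Gbar.edgeFinset.filter (fun e => ∀ x ∈ e, x ∈ S)).card : ℝ))
    (R2u : Finset (Fin N) → ℝ)
    (hR2u : ∀ S, R2u S =
      ((Gbar.edgeFinset.filter (fun e => ∀ x ∈ e, x ∉ S)).card : ℝ))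
    -- covariance under the permutation null distribution
    (Cov : (Finset (Fin N) → ℝ) → (Finset (Fin N) → ℝ) → ℝ)
    (hCov : ∀ f g, Cov f g = E (fun S => (f S - E f) * (g S - E g)))
    -- the constants p₁, q₁ and f₁
    (p₁ q₁ f₁ : ℝ)
    (hp₁ : p₁ = (n₁ : ℝ) * ((n₁ : ℝ) - 1) / ((N : ℝ) * ((N : ℝ) - 1)))
    (hq₁ : q₁ = (n₂ : ℝ) * ((n₂ : ℝ) - 1) / ((N : ℝ) * ((N : ℝ) - 1)))
    (hf₁ : f₁ = (n₁ : ℝ) * ((n₁ : ℝ) - 1) * (n₂ : ℝ) * ((n₂ : ℝ) - 1) /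
      ((N : ℝ) * ((N : ℝ) - 1) * ((N : ℝ) - 2) * ((N : ℝ) - 3))) :
    Cov R1u R2u = f₁ * ((Gbar.edgeFinset.card : ℝ) ^ 2 - (Gbar.edgeFinset.card : ℝ)
        - (∑ i, (Gbar.degree i : ℝ) * ((Gbar.degree i : ℝ) - 1)))
      - p₁ * q₁ * (Gbar.edgeFinset.card : ℝ) ^ 2 := by
  classical
  have hNn : n₁ ≤ N := by omega
  have hn2ge : 1 ≤ n₂ := by omega
  have hBpos : (0:ℝ) < (N.choose n₁ : ℝ) := by exact_mod_cast Nat.choose_pos hNn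
  have hBne : (N.choose n₁ : ℝ) ≠ 0 := ne_of_gt hBpos
  have hPcard : (((Finset.powersetCard n₁ (Finset.univ : Finset (Fin N))).card : ℕ) : ℝ)
      = (N.choose n₁ : ℝ) := by
    rw [Finset.card_powersetCard, Finset.card_univ, Fintype.card_fin]
  -- generic covariance formula
  have key : ∀ (f g : Finset (Fin N) → ℝ) (a b : ℝ), a = E f → b = E g →
      E (fun S => (f S - a) * (g S - b)) = E (fun S => f S * g S) - a * b := by
    intro f g a b haE hbE
    have ha : ∑ S ∈ Finset.powersetCard n₁ (Finset.univ : Finset (Fin N)), f S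
        = a * (N.choose n₁ : ℝ) := by rw [haE, hE f]; field_simp
    have hb : ∑ S ∈ Finset.powersetCard n₁ (Finset.univ : Finset (Fin N)), g S
        = b * (N.choose n₁ : ℝ) := by rw [hbE, hE g]; field_simp
    rw [hE, hE]
    have expand : ∀ S : Finset (Fin N), (f S - a) * (g S - b)
        = f S * g S - a * g S - b * f S + a * b := fun S => by ring
    rw [Finset.sum_congr rfl (fun S _ => expand S), Finset.sum_add_distrib,
      Finset.sum_sub_distrib, Finset.sum_sub_distrib, ← Finset.mul_sum, ← Finset.mul_sum,
      Finset.sum_const, nsmul_eq_mul, hPcard, ha, hb]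
    field_simp
    ring
  have covEq : Cov R1u R2u = E (fun S => R1u S * R2u S) - E R1u * E R2u := by
    rw [hCov]; exact key R1u R2u _ _ rfl rfl
  have Ezero : ∀ h : Finset (Fin N) → ℝ,
      (∀ S ∈ Finset.powersetCard n₁ (Finset.univ : Finset (Fin N)), h S = 0) → E h = 0 := by
    intro h hh
    rw [hE, Finset.sum_eq_zero hh, zero_div]
  have edge_two : ∀ e ∈ Gbar.edgeFinset, ∃ i j : Fin N, i ≠ j ∧ e = s(i, j) := by
    intro e he
    rw [SimpleGraph.mem_edgeFinset] at he
    refine Sym2.ind (f := fun e => e ∈ Gbar.edgeSet → ∃ i j : Fin N, i ≠ j ∧ e = s(i, j))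
      ?_ e he
    intro i j hadj
    exact ⟨i, j, ((SimpleGraph.mem_edgeSet _).mp hadj).ne, rfl⟩
  rcases Nat.lt_or_ge n₁ 2 with h1 | h2
  · -- degenerate case n₁ = 1
    have hn1 : n₁ = 1 := by omega
    have hz : ∀ S ∈ Finset.powersetCard n₁ (Finset.univ : Finset (Fin N)), R1u S = 0 := by
      intro S hS
      rw [hR1u]
      rw [Finset.filter_eq_empty_iff.mpr ?_]
      · simp
      · intro e he hall
        obtain ⟨i, j, hij, rfl⟩ := edge_two e he
        have hi : i ∈ S := hall i (by simp)
        have hj : j ∈ S := hall j (by simp)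
        have hc : S.card = n₁ := (Finset.mem_powersetCard.mp hS).2
        have h2le : 2 ≤ S.card := by
          calc 2 = ({i, j} : Finset (Fin N)).card := (Finset.card_pair hij).symm
            _ ≤ S.card := Finset.card_le_card (by
                intro x hx
                rcases Finset.mem_insert.mp hx with h | h
                · exact h ▸ hi
                · exact (Finset.mem_singleton.mp h) ▸ hj)
        omega
    have e1 : E R1u = 0 := Ezero _ hz
    have e12 : E (fun S => R1u S * R2u S) = 0 :=
      Ezero _ (fun S hS => by rw [hz S hS, zero_mul])
    rw [covEq, e1, e12, hp₁, hf₁, hn1]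
    norm_num
  rcases Nat.lt_or_ge n₂ 2 with h2' | h2''
  · -- degenerate case n₂ = 1
    have hn2v : n₂ = 1 := by omega
    have hn1v : n₁ = N - 1 := by omega
    have hz : ∀ S ∈ Finset.powersetCard n₁ (Finset.univ : Finset (Fin N)), R2u S = 0 := by
      intro S hS
      rw [hR2u]
      rw [Finset.filter_eq_empty_iff.mpr ?_]
      · simp
      · intro e he hall
        obtain ⟨i, j, hij, rfl⟩ := edge_two e he
        have hi : i ∉ S := hall i (by simp)
        have hj : j ∉ S := hall j (by simp)
        have hc : S.card = n₁ := (Finset.mem_powersetCard.mp hS).2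
        have hcompl : (Finset.univ \ S).card = N - n₁ := by
          rw [Finset.card_sdiff_of_subset (Finset.subset_univ _), Finset.card_univ, Fintype.card_fin, hc]
        have h2le : 2 ≤ (Finset.univ \ S).card := by
          calc 2 = ({i, j} : Finset (Fin N)).card := (Finset.card_pair hij).symm
            _ ≤ (Finset.univ \ S).card := Finset.card_le_card (by
                intro x hx
                rcases Finset.mem_insert.mp hx with h | h
                · subst h; simp [hi]
                · rw [Finset.mem_singleton.mp h]; simp [hj])
        omega
    have e2 : E R2u = 0 := Ezero _ hz
    have e12 : E (fun S => R1u S * R2u S) = 0 :=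
      Ezero _ (fun S hS => by rw [hz S hS, mul_zero])
    rw [covEq, e2, e12, hq₁, hf₁, hn2v]
    norm_num
  -- main case : 2 ≤ n₁ and 2 ≤ n₂
  obtain ⟨a, ha2⟩ : ∃ a, n₁ = a + 2 := ⟨n₁ - 2, by omega⟩
  obtain ⟨b, hb2⟩ : ∃ b, n₂ = b + 2 := ⟨n₂ - 2, by omega⟩
  have hNab : N = a + b + 4 := by omega
  have hn₁R : (n₁ : ℝ) = (a : ℝ) + 2 := by exact_mod_cast congrArg (Nat.cast : ℕ → ℝ) ha2
  have hn₂R : (n₂ : ℝ) = (b : ℝ) + 2 := by exact_mod_cast congrArg (Nat.cast : ℕ → ℝ) hb2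
  have hNR : (N : ℝ) = (a : ℝ) + (b : ℝ) + 4 := by
    exact_mod_cast congrArg (Nat.cast : ℕ → ℝ) hNab
  -- pointwise expansions as indicator sums
  have expand1 : ∀ S : Finset (Fin N), R1u S
      = ∑ e ∈ Gbar.edgeFinset, (if ∀ x ∈ e, x ∈ S then (1:ℝ) else 0) := by
    intro S
    rw [hR1u, Finset.card_filter, Nat.cast_sum]
    apply Finset.sum_congr rfl
    intro e _
    split_ifs <;> simp
  have expand2 : ∀ S : Finset (Fin N), R2u S
      = ∑ e ∈ Gbar.edgeFinset, (if ∀ x ∈ e, x ∉ S then (1:ℝ) else 0) := by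
    intro S
    rw [hR2u, Finset.card_filter, Nat.cast_sum]
    apply Finset.sum_congr rfl
    intro e _
    split_ifs <;> simp
  -- sum of R1u over all S
  have sum1 : ∑ S ∈ Finset.powersetCard n₁ (Finset.univ : Finset (Fin N)), R1u S
      = (Gbar.edgeFinset.card : ℝ) * (((N - 2).choose (n₁ - 2) : ℕ) : ℝ) := by
    rw [Finset.sum_congr rfl (fun S _ => expand1 S), Finset.sum_comm]
    rw [Finset.sum_congr rfl (fun e he => ?_), Finset.sum_const, nsmul_eq_mul]
    obtain ⟨i, j, hij, rfl⟩ := edge_two e he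
    rw [Finset.sum_boole]
    have hfil : (Finset.powersetCard n₁ (Finset.univ : Finset (Fin N))).filter
        (fun S => ∀ x ∈ s(i,j), x ∈ S)
        = (Finset.powersetCard n₁ (Finset.univ : Finset (Fin N))).filter
          (fun S => i ∈ S ∧ j ∈ S) := by
      apply Finset.filter_congr
      intro S _
      simp [Sym2.mem_iff, or_imp, forall_and, forall_eq]
    rw [hfil, count_in i j hij n₁ h2, Fintype.card_fin]
  -- sum of R2u over all S
  have sum2 : ∑ S ∈ Finset.powersetCard n₁ (Finset.univ : Finset (Fin N)), R2u S
      = (Gbar.edgeFinset.card : ℝ) * (((N - 2).choose n₁ : ℕ) : ℝ) := by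
    rw [Finset.sum_congr rfl (fun S _ => expand2 S), Finset.sum_comm]
    rw [Finset.sum_congr rfl (fun e he => ?_), Finset.sum_const, nsmul_eq_mul]
    obtain ⟨i, j, hij, rfl⟩ := edge_two e he
    rw [Finset.sum_boole]
    have hfil : (Finset.powersetCard n₁ (Finset.univ : Finset (Fin N))).filter
        (fun S => ∀ x ∈ s(i,j), x ∉ S)
        = (Finset.powersetCard n₁ (Finset.univ : Finset (Fin N))).filter
          (fun S => i ∉ S ∧ j ∉ S) := by
      apply Finset.filter_congr
      intro S _
      simp [Sym2.mem_iff, or_imp, forall_and, forall_eq]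
    rw [hfil, count_out i j hij n₁, Fintype.card_fin]
  -- sum of products
  have expand12 : ∀ S : Finset (Fin N), R1u S * R2u S
      = ∑ p ∈ Gbar.edgeFinset ×ˢ Gbar.edgeFinset,
          (if (∀ x ∈ p.1, x ∈ S) ∧ (∀ x ∈ p.2, x ∉ S) then (1:ℝ) else 0) := by
    intro S
    rw [Finset.sum_product, expand1 S, expand2 S, Finset.sum_mul_sum]
    apply Finset.sum_congr rfl
    intro e _
    apply Finset.sum_congr rfl
    intro f _
    rcases Classical.em (∀ x ∈ e, x ∈ S) with hA | hA
    · rcases Classical.em (∀ x ∈ f, x ∉ S) with hB | hB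
      · rw [if_pos hA, if_pos hB, if_pos (show _ ∧ _ from ⟨hA, hB⟩)]
        norm_num
      · rw [if_pos hA, if_neg hB, if_neg (fun h : (∀ x ∈ e, x ∈ S) ∧ (∀ x ∈ f, x ∉ S) => hB h.2)]
        norm_num
    · rw [if_neg hA, if_neg (fun h : (∀ x ∈ e, x ∈ S) ∧ (∀ x ∈ f, x ∉ S) => hA h.1)]
      ring
  have sum12 : ∑ S ∈ Finset.powersetCard n₁ (Finset.univ : Finset (Fin N)), R1u S * R2u S
      = ((((Gbar.edgeFinset ×ˢ Gbar.edgeFinset).filter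
            (fun p => ¬ ∃ x, x ∈ p.1 ∧ x ∈ p.2)).card : ℕ) : ℝ)
        * (((N - 4).choose (n₁ - 2) : ℕ) : ℝ) := by
    rw [Finset.sum_congr rfl (fun S _ => expand12 S), Finset.sum_comm]
    have step : ∀ p ∈ Gbar.edgeFinset ×ˢ Gbar.edgeFinset,
        (∑ S ∈ Finset.powersetCard n₁ (Finset.univ : Finset (Fin N)),
          (if (∀ x ∈ p.1, x ∈ S) ∧ (∀ x ∈ p.2, x ∉ S) then (1:ℝ) else 0))
        = (if (∃ x, x ∈ p.1 ∧ x ∈ p.2) then 0 else (((N - 4).choose (n₁ - 2) : ℕ) : ℝ)) := by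
      intro p hp
      obtain ⟨hp1, hp2⟩ := Finset.mem_product.mp hp
      rw [Finset.sum_boole]
      by_cases hsh : ∃ z, z ∈ p.1 ∧ z ∈ p.2
      · rw [if_pos hsh]
        obtain ⟨z, hz1, hz2⟩ := hsh
        rw [Finset.filter_eq_empty_iff.mpr (fun S _ hcon => (hcon.2 z hz2) (hcon.1 z hz1))]
        simp
      · rw [if_neg hsh]
        obtain ⟨i, j, hij, he⟩ := edge_two p.1 hp1
        obtain ⟨x, y, hxy, hf⟩ := edge_two p.2 hp2
        have hix : i ≠ x := fun h => hsh ⟨i, by simp [he], by simp [hf, h]⟩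
        have hiy : i ≠ y := fun h => hsh ⟨i, by simp [he], by simp [hf, h]⟩
        have hjx : j ≠ x := fun h => hsh ⟨j, by simp [he], by simp [hf, h]⟩
        have hjy : j ≠ y := fun h => hsh ⟨j, by simp [he], by simp [hf, h]⟩
        have hfil : (Finset.powersetCard n₁ (Finset.univ : Finset (Fin N))).filter
            (fun S => (∀ x ∈ p.1, x ∈ S) ∧ (∀ x ∈ p.2, x ∉ S))
            = (Finset.powersetCard n₁ (Finset.univ : Finset (Fin N))).filter
              (fun S => (i ∈ S ∧ j ∈ S) ∧ (x ∉ S ∧ y ∉ S)) := by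
          apply Finset.filter_congr
          intro S _
          simp [he, hf, Sym2.mem_iff, or_imp, forall_and, forall_eq]
        rw [hfil, count_inout i j x y hij hxy hix hiy hjx hjy n₁ h2, Fintype.card_fin]
    rw [Finset.sum_congr rfl step, Finset.sum_ite, Finset.sum_const, Finset.sum_const,
      nsmul_eq_mul, nsmul_eq_mul]
    ring
  -- value of the disjoint-pair count
  have pairsplit := Finset.card_filter_add_card_filter_not
    (s := Gbar.edgeFinset ×ˢ Gbar.edgeFinset) (fun p : Sym2 (Fin N) × Sym2 (Fin N) => ∃ x, x ∈ p.1 ∧ x ∈ p.2)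
  have hshare := card_nondisj_pairs Gbar
  have hprod : (Gbar.edgeFinset ×ˢ Gbar.edgeFinset).card = Gbar.edgeFinset.card * Gbar.edgeFinset.card :=
    by rw [Finset.card_product]
  have castterm : ∀ i : Fin N, ((Gbar.degree i * (Gbar.degree i - 1) : ℕ) : ℝ)
      = (Gbar.degree i : ℝ) * ((Gbar.degree i : ℝ) - 1) := by
    intro i
    rcases Nat.eq_zero_or_pos (Gbar.degree i) with h | h
    · simp [h]
    · rw [Nat.cast_mul, Nat.cast_sub h, Nat.cast_one]
  have hDn : ((((Gbar.edgeFinset ×ˢ Gbar.edgeFinset).filter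
        (fun p => ¬ ∃ x, x ∈ p.1 ∧ x ∈ p.2)).card : ℕ) : ℝ)
      = (Gbar.edgeFinset.card : ℝ) ^ 2 - (Gbar.edgeFinset.card : ℝ)
        - (∑ i, (Gbar.degree i : ℝ) * ((Gbar.degree i : ℝ) - 1)) := by
    have hcast : ((((Gbar.edgeFinset ×ˢ Gbar.edgeFinset).filter
          (fun p => (∃ x, x ∈ p.1 ∧ x ∈ p.2))).card : ℕ) : ℝ)
        = (Gbar.edgeFinset.card : ℝ)
          + (∑ i, (Gbar.degree i : ℝ) * ((Gbar.degree i : ℝ) - 1)) := by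
      rw [show (((Gbar.edgeFinset ×ˢ Gbar.edgeFinset).filter (fun p => (∃ x, x ∈ p.1 ∧ x ∈ p.2))).card) = Gbar.edgeFinset.card + ∑ i, Gbar.degree i * (Gbar.degree i - 1) from by convert hshare]
      push_cast [castterm]
      congr!
    rw [hprod] at pairsplit
    have hc3 : ((((Gbar.edgeFinset ×ˢ Gbar.edgeFinset).filter
          (fun p => (∃ x, x ∈ p.1 ∧ x ∈ p.2))).card : ℕ) : ℝ)
        + ((((Gbar.edgeFinset ×ˢ Gbar.edgeFinset).filter
          (fun p => ¬ ∃ x, x ∈ p.1 ∧ x ∈ p.2)).card : ℕ) : ℝ)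
        = (Gbar.edgeFinset.card : ℝ) * (Gbar.edgeFinset.card : ℝ) := by
      exact_mod_cast congrArg (Nat.cast : ℕ → ℝ) pairsplit
    rw [hcast] at hc3
    rw [pow_two]
    linarith [hc3]
  -- ratio identities
  have hrp : (((N - 2).choose (n₁ - 2) : ℕ) : ℝ) / (N.choose n₁ : ℝ) = p₁ := by
    have h1 : (N - 2).choose (n₁ - 2) = (a + b + 2).choose a := by congr 1 <;> omega
    have h2 : N.choose n₁ = ((a + b + 2) + 2).choose (a + 2) := by congr 1 <;> omega
    rw [h1, h2, ratio1 a (a + b + 2) (by omega), hp₁, hn₁R, hNR]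
    push_cast
    ring_nf
  have hrq : (((N - 2).choose n₁ : ℕ) : ℝ) / (N.choose n₁ : ℝ) = q₁ := by
    have h1 : (N - 2).choose n₁ = (n₁ + b).choose n₁ := by congr 1; omega
    have h2 : N.choose n₁ = (n₁ + b + 2).choose n₁ := by congr 1; omega
    rw [h1, h2, ratio2 n₁ b, hq₁, hn₂R, hNR, hn₁R]
    push_cast
    ring_nf
  have hrf : (((N - 4).choose (n₁ - 2) : ℕ) : ℝ) / (N.choose n₁ : ℝ) = f₁ := by
    have h1 : (N - 4).choose (n₁ - 2) = (a + b).choose a := by congr 1 <;> omega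
    have h2 : N.choose n₁ = (a + b + 4).choose (a + 2) := by congr 1 <;> omega
    rw [h1, h2, ratio3 a b, hf₁, hn₁R, hn₂R, hNR]
    push_cast
    ring_nf
  -- put everything together
  rw [covEq, hE R1u, hE R2u, hE (fun S => R1u S * R2u S), sum1, sum2, sum12]
  calc ((((Gbar.edgeFinset ×ˢ Gbar.edgeFinset).filter
          (fun p => ¬ ∃ x, x ∈ p.1 ∧ x ∈ p.2)).card : ℕ) : ℝ)
          * (((N - 4).choose (n₁ - 2) : ℕ) : ℝ) / (N.choose n₁ : ℝ)
        - ((Gbar.edgeFinset.card : ℝ) * (((N - 2).choose (n₁ - 2) : ℕ) : ℝ) / (N.choose n₁ : ℝ))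
          * ((Gbar.edgeFinset.card : ℝ) * (((N - 2).choose n₁ : ℕ) : ℝ) / (N.choose n₁ : ℝ))
      = ((((Gbar.edgeFinset ×ˢ Gbar.edgeFinset).filter
          (fun p => ¬ ∃ x, x ∈ p.1 ∧ x ∈ p.2)).card : ℕ) : ℝ)
          * ((((N - 4).choose (n₁ - 2) : ℕ) : ℝ) / (N.choose n₁ : ℝ))
        - (Gbar.edgeFinset.card : ℝ) ^ 2
          * (((((N - 2).choose (n₁ - 2) : ℕ) : ℝ) / (N.choose n₁ : ℝ))
            * ((((N - 2).choose n₁ : ℕ) : ℝ) / (N.choose n₁ : ℝ))) := by ring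
    _ = ((((Gbar.edgeFinset ×ˢ Gbar.edgeFinset).filter
          (fun p => ¬ ∃ x, x ∈ p.1 ∧ x ∈ p.2)).card : ℕ) : ℝ) * f₁
        - (Gbar.edgeFinset.card : ℝ) ^ 2 * (p₁ * q₁) := by rw [hrf, hrp, hrq]
    _ = f₁ * ((Gbar.edgeFinset.card : ℝ) ^ 2 - (Gbar.edgeFinset.card : ℝ)
          - (∑ i, (Gbar.degree i : ℝ) * ((Gbar.degree i : ℝ) - 1)))
        - p₁ * q₁ * (Gbar.edgeFinset.card : ℝ) ^ 2 := by rw [hDn]; ring
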